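/- Let A be an extended 1-clock PTA (1cPTA). Then every reachable symbolic state (l, C) of A satisfies C ∈ 1CSC(A), i.e., C is a conjunction of constraints of the form lt ⋈ x and lt¹ ⋈ lt² where x is the unique clock and lt, lt¹, lt² are parametric linear terms appearing in guards or invariants of A or equal to 0. -/

import Mathlib

namespace PTAPaper

/-- Comparison operators `<, ≤, =, ≥, >`. -/
inductive Cmp : Type
  | lt
  | le
  | eq
  | ge
  | gt

/-- Semantics of a comparison operator on the reals. -/
def Cmp.holds : Cmp → ℝ → ℝ → Prop
  | .lt, a, b => a < b
  | .le, a, b => a ≤ b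
  | .eq, a, b => a = b
  | .ge, a, b => b ≤ a
  | .gt, a, b => b < a

/-- A parametric linear term `Σᵢ αᵢ pᵢ + c` over parameters `P`. -/
structure LinTerm (P : Type) : Type where
  coef : P → ℤ
  const : ℤ

/-- Evaluation of a parametric linear term at a parameter valuation. -/
def LinTerm.eval {P : Type} [Fintype P] (t : LinTerm P) (ρ : P → ℝ) : ℝ :=
  (∑ p, (t.coef p : ℝ) * ρ p) + (t.const : ℝ)

/-- The zero linear term. -/
def zeroTerm (P : Type) : LinTerm P := ⟨fun _ => 0, 0⟩

/-- A guard or invariant of an extended 1-clock PTA: a conjunction of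
constraints `x ⋈ lt` on the (unique) clock `x`. -/
abbrev OCConstraint (P : Type) := List (Cmp × LinTerm P)

def OCConstraint.sat {P : Type} [Fintype P] (x : ℝ) (ρ : P → ℝ)
    (g : OCConstraint P) : Prop :=
  ∀ a ∈ g, a.1.holds x (a.2.eval ρ)

/-- An edge of an extended 1-clock PTA; `reset` tells whether the clock is reset. -/
structure OCEdge (σ L P : Type) : Type where
  src : L
  guard : OCConstraint P
  act : σ
  reset : Bool
  dst : L

/-- An extended 1-clock PTA (1cPTA): a PTA with a single clock, whose guards
and invariants compare the clock with parametric linear terms. -/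
structure OCPTA (σ L P : Type) : Type where
  init : L
  inv : L → OCConstraint P
  edges : List (OCEdge σ L P)

/-- The parametric linear terms occurring in the guards and invariants of `A`. -/
def OCPTA.terms {σ L P : Type} (A : OCPTA σ L P) : Set (LinTerm P) :=
  {t | (∃ l, ∃ a ∈ A.inv l, a.2 = t) ∨ (∃ e ∈ A.edges, ∃ a ∈ e.guard, a.2 = t)}

/-- A (semantic) zone over the single clock and the parameters. -/
abbrev Zone1 (P : Type) := Set (ℝ × (P → ℝ))

/-- Projection of a zone onto the parameters. -/
def Zone1.projP {P : Type} (Z : Zone1 P) : Set (P → ℝ) := {ρ | ∃ x, (x, ρ) ∈ Z}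

/-- Time elapsing of a zone. -/
def Zone1.elapse {P : Type} (Z : Zone1 P) : Zone1 P :=
  {xρ | ∃ x d, 0 ≤ d ∧ (x, xρ.2) ∈ Z ∧ xρ.1 = x + d}

/-- Resetting the clock in a zone (when `b = true`). -/
def Zone1.reset {P : Type} (b : Bool) (Z : Zone1 P) : Zone1 P :=
  if b then {xρ | ∃ x, (x, xρ.2) ∈ Z ∧ xρ.1 = 0} else Z

/-- The zone defined by a constraint. -/
def ocZone {P : Type} [Fintype P] (g : OCConstraint P) : Zone1 P :=
  {xρ | OCConstraint.sat xρ.1 xρ.2 g}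

/-- The initial symbolic state `(l₀, (x = 0)↗ ∧ I(l₀))`. -/
def initSym1 {σ L P : Type} [Fintype P] (A : OCPTA σ L P) : L × Zone1 P :=
  (A.init, Zone1.elapse {xρ | xρ.1 = 0} ∩ ocZone (A.inv A.init))

/-- Successor of a symbolic state via some edge:
`(l', ((C ∧ g)[R←0])↗ ∧ I(l'))`, when nonempty. -/
def OCSucc {σ L P : Type} [Fintype P] (A : OCPTA σ L P)
    (s s' : L × Zone1 P) : Prop :=
  ∃ e ∈ A.edges, e.src = s.1 ∧ s'.1 = e.dst ∧
    s'.2 = Zone1.elapse (Zone1.reset e.reset (s.2 ∩ ocZone e.guard)) ∩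
        ocZone (A.inv e.dst) ∧
    s'.2.Nonempty

/-- The reachable symbolic states of the parametric zone graph of `A`
(symbolic states with the same location and the same set of satisfying
valuations are identified). -/
inductive OCReach {σ L P : Type} [Fintype P] (A : OCPTA σ L P) :
    (L × Zone1 P) → Prop
  | init : OCReach A (initSym1 A)
  | succ {s s' : L × Zone1 P} : OCReach A s → OCSucc A s s' → OCReach A s'

/-- `Z` is (defined by) a 1-clock symbolic constraint of `A`: a conjunction
`⋀ᵢ (ltᵢ ⋈ x) ∧ ⋀ⱼ (lt¹ⱼ ⋈ lt²ⱼ)` whose parametric linear terms appear in the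
guards and invariants of `A` or are equal to `0`, where the `lt¹ⱼ, lt²ⱼ` are
all different from each other. -/
def In1CSC {σ L P : Type} [Fintype P] (A : OCPTA σ L P) (Z : Zone1 P) : Prop :=
  ∃ (clkAtoms : List (LinTerm P × Cmp)) (parAtoms : List (LinTerm P × Cmp × LinTerm P)),
    (∀ a ∈ clkAtoms, a.1 ∈ insert (zeroTerm P) A.terms) ∧
    (∀ a ∈ parAtoms, a.1 ∈ insert (zeroTerm P) A.terms ∧
        a.2.2 ∈ insert (zeroTerm P) A.terms ∧ a.1 ≠ a.2.2) ∧
    (parAtoms.map (fun a => (a.1, a.2.2))).Pairwise (· ≠ ·) ∧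
    Z = {xρ | (∀ a ∈ clkAtoms, a.2.holds (a.1.eval xρ.2) xρ.1) ∧
              (∀ a ∈ parAtoms, a.2.1.holds (a.1.eval xρ.2) (a.2.2.eval xρ.2))}

/-! ### Auxiliary machinery for the proof -/

section CmpAux

def Cmp.flip : Cmp → Cmp
  | .lt => .gt | .le => .ge | .eq => .eq | .ge => .le | .gt => .lt

lemma Cmp.flip_holds (c : Cmp) (a b : ℝ) : c.flip.holds a b ↔ c.holds b a := by
  cases c <;> simp [Cmp.holds, Cmp.flip, eq_comm]

def Cmp.allows : Cmp → Ordering → Bool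
  | .lt, .lt => true
  | .le, .lt => true
  | .le, .eq => true
  | .eq, .eq => true
  | .ge, .eq => true
  | .ge, .gt => true
  | .gt, .gt => true
  | _, _ => false

noncomputable def ocmp (a b : ℝ) : Ordering :=
  if a < b then .lt else if a = b then .eq else .gt

lemma ocmp_self (a : ℝ) : ocmp a a = .eq := by simp [ocmp]

lemma holds_iff_allows (c : Cmp) (a b : ℝ) : c.holds a b ↔ c.allows (ocmp a b) = true := by
  unfold ocmp
  rcases lt_trichotomy a b with h | h | h
  · rw [if_pos h]; cases c <;> simp [Cmp.holds, Cmp.allows] <;> linarith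
  · rw [if_neg (by linarith), if_pos h]; cases c <;> simp [Cmp.holds, Cmp.allows, h]
  · rw [if_neg (by linarith), if_neg (by intro hh; exact absurd hh.le (not_le.2 h))]
    cases c <;> simp [Cmp.holds, Cmp.allows] <;> linarith

def Cmp.meet : Cmp → Cmp → Option Cmp
  | .lt, .lt => some .lt
  | .lt, .le => some .lt
  | .le, .lt => some .lt
  | .le, .le => some .le
  | .le, .eq => some .eq
  | .eq, .le => some .eq
  | .le, .ge => some .eq
  | .ge, .le => some .eq
  | .eq, .eq => some .eq
  | .eq, .ge => some .eq
  | .ge, .eq => some .eq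
  | .ge, .ge => some .ge
  | .ge, .gt => some .gt
  | .gt, .ge => some .gt
  | .gt, .gt => some .gt
  | _, _ => none

lemma Cmp.meet_allows (c1 c2 : Cmp) (o : Ordering) :
    (Cmp.meet c1 c2).elim false (fun c => c.allows o) = (c1.allows o && c2.allows o) := by
  cases c1 <;> cases c2 <;> cases o <;> rfl

lemma Cmp.meet_none {c1 c2 : Cmp} (h : Cmp.meet c1 c2 = none) (o : Ordering) :
    ¬(c1.allows o = true ∧ c2.allows o = true) := by
  have := Cmp.meet_allows c1 c2 o
  rw [h] at this
  simp only [Option.elim] at this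
  intro ⟨h1, h2⟩
  rw [h1, h2] at this
  simp at this

lemma Cmp.meet_some {c1 c2 c : Cmp} (h : Cmp.meet c1 c2 = some c) (o : Ordering) :
    c.allows o = true ↔ (c1.allows o = true ∧ c2.allows o = true) := by
  have := Cmp.meet_allows c1 c2 o
  rw [h] at this
  simp only [Option.elim] at this
  rw [this]
  simp

end CmpAux

section CanonAux

variable {K : Type} [DecidableEq K]

def insertAtom (a : K × Cmp) : List (K × Cmp) → Option (List (K × Cmp))
  | [] => some [a]
  | b :: rest =>
      if a.1 = b.1 then (Cmp.meet b.2 a.2).map (fun c => (a.1, c) :: rest)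
      else (insertAtom a rest).map (b :: ·)

def canon : List (K × Cmp) → Option (List (K × Cmp))
  | [] => some []
  | a :: rest => (canon rest).bind (insertAtom a)

def SemL (F : K → Ordering) (l : List (K × Cmp)) : Prop :=
  ∀ a ∈ l, a.2.allows (F a.1) = true

omit [DecidableEq K] in
lemma semL_cons {F : K → Ordering} {a : K × Cmp} {l : List (K × Cmp)} :
    SemL F (a :: l) ↔ (a.2.allows (F a.1) = true ∧ SemL F l) := by
  simp [SemL]

lemma insertAtom_keys {a : K × Cmp} :
    ∀ {l l' : List (K × Cmp)}, insertAtom a l = some l' →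
      ∀ b ∈ l', b.1 = a.1 ∨ ∃ c ∈ l, c.1 = b.1 := by
  intro l
  induction l with
  | nil =>
    intro l' h b hb
    simp [insertAtom] at h
    subst h
    simp at hb
    subst hb
    exact Or.inl rfl
  | cons c rest ih =>
    intro l' h b hb
    by_cases hk : a.1 = c.1
    · rw [insertAtom, if_pos hk] at h
      rcases hm : Cmp.meet c.2 a.2 with _ | cc
      · rw [hm] at h; simp at h
      · rw [hm] at h; simp at h
        subst h
        rcases List.mem_cons.1 hb with rfl | hb
        · exact Or.inl rfl
        · exact Or.inr ⟨b, List.mem_cons_of_mem _ hb, rfl⟩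
    · rw [insertAtom, if_neg hk] at h
      rcases hr : insertAtom a rest with _ | r'
      · rw [hr] at h; simp at h
      · rw [hr] at h; simp at h
        subst h
        rcases List.mem_cons.1 hb with rfl | hb
        · exact Or.inr ⟨b, List.mem_cons_self, rfl⟩
        · rcases ih hr b hb with h1 | ⟨d, hd, hdd⟩
          · exact Or.inl h1
          · exact Or.inr ⟨d, List.mem_cons_of_mem _ hd, hdd⟩

lemma insertAtom_sem (F : K → Ordering) (a : K × Cmp) :
    ∀ {l : List (K × Cmp)},
      (∀ l', insertAtom a l = some l' →
        (SemL F l' ↔ (a.2.allows (F a.1) = true ∧ SemL F l))) ∧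
      (insertAtom a l = none → ¬(a.2.allows (F a.1) = true ∧ SemL F l)) := by
  intro l
  induction l with
  | nil =>
    constructor
    · intro l' h
      simp [insertAtom] at h
      subst h
      simp [SemL]
    · intro h; simp [insertAtom] at h
  | cons c rest ih =>
    by_cases hk : a.1 = c.1
    · constructor
      · intro l' h
        rw [insertAtom, if_pos hk] at h
        rcases hm : Cmp.meet c.2 a.2 with _ | cc
        · rw [hm] at h; simp at h
        · rw [hm] at h; simp at h
          subst h
          rw [semL_cons, semL_cons]
          rw [Cmp.meet_some hm]
          rw [hk]
          tauto
      · intro h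
        rw [insertAtom, if_pos hk] at h
        rcases hm : Cmp.meet c.2 a.2 with _ | cc
        · rw [semL_cons]
          intro ⟨h1, h2, h3⟩
          exact Cmp.meet_none hm (F a.1) ⟨by rw [hk]; exact h2, h1⟩
        · rw [hm] at h; simp at h
    · constructor
      · intro l' h
        rw [insertAtom, if_neg hk] at h
        rcases hr : insertAtom a rest with _ | r'
        · rw [hr] at h; simp at h
        · rw [hr] at h; simp at h
          subst h
          rw [semL_cons, semL_cons, ih.1 r' hr]
          tauto
      · intro h
        rw [insertAtom, if_neg hk] at h
        rcases hr : insertAtom a rest with _ | r'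
        · rw [semL_cons]
          intro ⟨h1, _, h3⟩
          exact ih.2 hr ⟨h1, h3⟩
        · rw [hr] at h; simp at h

lemma insertAtom_pairwise {a : K × Cmp} :
    ∀ {l l' : List (K × Cmp)}, insertAtom a l = some l' →
      (l.map Prod.fst).Pairwise (· ≠ ·) → (l'.map Prod.fst).Pairwise (· ≠ ·) := by
  intro l
  induction l with
  | nil =>
    intro l' h _
    simp [insertAtom] at h
    subst h
    simp
  | cons c rest ih =>
    intro l' h hp
    simp only [List.map_cons, List.pairwise_cons] at hp
    by_cases hk : a.1 = c.1
    · rw [insertAtom, if_pos hk] at h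
      rcases hm : Cmp.meet c.2 a.2 with _ | cc
      · rw [hm] at h; simp at h
      · rw [hm] at h; simp at h
        subst h
        simp only [List.map_cons, List.pairwise_cons]
        refine ⟨?_, hp.2⟩
        intro k hkm
        rw [hk]
        exact hp.1 k hkm
    · rw [insertAtom, if_neg hk] at h
      rcases hr : insertAtom a rest with _ | r'
      · rw [hr] at h; simp at h
      · rw [hr] at h; simp at h
        subst h
        simp only [List.map_cons, List.pairwise_cons]
        refine ⟨?_, ih hr hp.2⟩
        intro k hkm
        simp only [List.mem_map] at hkm
        obtain ⟨b, hb, rfl⟩ := hkm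
        rcases insertAtom_keys hr b hb with h1 | ⟨d, hd, hdd⟩
        · rw [h1]; exact fun hh => hk hh.symm
        · rw [← hdd]
          exact hp.1 d.1 (List.mem_map.2 ⟨d, hd, rfl⟩)

lemma canon_spec :
    ∀ (l : List (K × Cmp)),
      (∀ l', canon l = some l' →
        ((∀ F, (SemL F l' ↔ SemL F l)) ∧
         (∀ b ∈ l', ∃ c ∈ l, c.1 = b.1) ∧
         (l'.map Prod.fst).Pairwise (· ≠ ·))) ∧
      (∀ F, canon l = none → ¬ SemL F l) := by
  intro l
  induction l with
  | nil =>
    constructor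
    · intro l' h
      simp [canon] at h
      subst h
      simp [SemL]
    · intro F h; simp [canon] at h
  | cons a rest ih =>
    constructor
    · intro l' h
      rw [canon] at h
      rcases hr : canon rest with _ | m
      · rw [hr] at h; simp at h
      · rw [hr] at h; simp at h
        obtain ⟨hsem, hkeys, hpw⟩ := ih.1 m hr
        refine ⟨?_, ?_, insertAtom_pairwise h hpw⟩
        · intro F
          rw [(insertAtom_sem F a).1 l' h, semL_cons, hsem F]
        · intro b hb
          rcases insertAtom_keys h b hb with h1 | ⟨d, hd, hdd⟩
          · exact ⟨a, List.mem_cons_self, h1.symm⟩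
          · obtain ⟨c, hc, hcc⟩ := hkeys d hd
            exact ⟨c, List.mem_cons_of_mem _ hc, hcc.trans hdd⟩
    · intro F h
      rw [canon] at h
      rcases hr : canon rest with _ | m
      · rw [semL_cons]
        intro ⟨_, h2⟩
        exact ih.2 F hr h2
      · rw [hr] at h; simp at h
        obtain ⟨hsem, _, _⟩ := ih.1 m hr
        rw [semL_cons]
        intro ⟨h1, h2⟩
        exact (insertAtom_sem F a).2 h ⟨h1, (hsem F).2 h2⟩

end CanonAux

section HellyAux

def lbd (x : ℝ) (l : ℝ × Bool) : Prop := if l.2 then l.1 < x else l.1 ≤ x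
def ubd (x : ℝ) (u : ℝ × Bool) : Prop := if u.2 then x < u.1 else x ≤ u.1
def pok (l u : ℝ × Bool) : Prop := if l.2 || u.2 then l.1 < u.1 else l.1 ≤ u.1

lemma lbd_mono {x y : ℝ} (h : x ≤ y) {l : ℝ × Bool} (hl : lbd x l) : lbd y l := by
  obtain ⟨v, s⟩ := l; cases s <;> simp [lbd] at * <;> linarith

lemma ubd_mono {x y : ℝ} (h : y ≤ x) {u : ℝ × Bool} (hu : ubd x u) : ubd y u := by
  obtain ⟨v, s⟩ := u; cases s <;> simp [ubd] at * <;> linarith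

lemma pok_of {x : ℝ} {l u : ℝ × Bool} (hl : lbd x l) (hu : ubd x u) : pok l u := by
  obtain ⟨a, s⟩ := l; obtain ⟨b, t⟩ := u
  cases s <;> cases t <;> simp [lbd, ubd, pok] at * <;> linarith

lemma pok_upper_free (l : ℝ × Bool) (x : ℝ) : pok l (x, false) ↔ lbd x l := by
  obtain ⟨v, s⟩ := l; cases s <;> simp [pok, lbd]

lemma list_max {α : Type*} (f : α → ℝ) :
    ∀ (l : List α), l ≠ [] → ∃ a ∈ l, ∀ b ∈ l, f b ≤ f a := by
  intro l
  induction l with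
  | nil => intro h; exact absurd rfl h
  | cons a t ih =>
    intro _
    rcases eq_or_ne t [] with rfl | hne
    · exact ⟨a, List.mem_cons_self, by simp⟩
    · obtain ⟨m, hm, hmax⟩ := ih hne
      rcases le_total (f a) (f m) with h | h
      · refine ⟨m, List.mem_cons_of_mem _ hm, ?_⟩
        intro b hb
        rcases List.mem_cons.1 hb with rfl | hb
        · exact h
        · exact hmax b hb
      · refine ⟨a, List.mem_cons_self, ?_⟩
        intro b hb
        rcases List.mem_cons.1 hb with rfl | hb
        · exact le_refl _
        · exact (hmax b hb).trans h

lemma ex_ubd (Us : List (ℝ × Bool)) : ∃ x, ∀ u ∈ Us, ubd x u := by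
  induction Us with
  | nil => exact ⟨0, by simp⟩
  | cons u t ih =>
    obtain ⟨x, hx⟩ := ih
    refine ⟨min x (u.1 - 1), ?_⟩
    intro v hv
    rcases List.mem_cons.1 hv with rfl | hv
    · have : min x (v.1 - 1) ≤ v.1 - 1 := min_le_right _ _
      obtain ⟨b, s⟩ := v; cases s <;> simp [ubd] at * <;> linarith
    · exact ubd_mono (min_le_left _ _) (hx v hv)

lemma ex_ubd_gt (m : ℝ) (Us : List (ℝ × Bool)) (h : ∀ u ∈ Us, m < u.1) :
    ∃ x, m < x ∧ ∀ u ∈ Us, ubd x u := by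
  induction Us with
  | nil => exact ⟨m + 1, by linarith, by simp⟩
  | cons u t ih =>
    obtain ⟨x, hmx, hx⟩ := ih (fun v hv => h v (List.mem_cons_of_mem _ hv))
    have hu := h u (List.mem_cons_self)
    refine ⟨min x ((m + u.1) / 2), lt_min hmx (by linarith), ?_⟩
    intro v hv
    rcases List.mem_cons.1 hv with rfl | hv
    · have h2 : min x ((m + v.1) / 2) ≤ (m + v.1) / 2 := min_le_right _ _
      obtain ⟨b, s⟩ := v
      simp only at hu h2 ⊢
      cases s
      · simpa [ubd] using h2.trans (by linarith : (m + b) / 2 ≤ b)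
      · simpa [ubd] using lt_of_le_of_lt h2 (by linarith : (m + b) / 2 < b)
    · exact ubd_mono (min_le_left _ _) (hx v hv)

lemma helly (Ls Us : List (ℝ × Bool)) (h : ∀ l ∈ Ls, ∀ u ∈ Us, pok l u) :
    ∃ x, (∀ l ∈ Ls, lbd x l) ∧ (∀ u ∈ Us, ubd x u) := by
  rcases eq_or_ne Ls [] with rfl | hne
  · obtain ⟨x, hx⟩ := ex_ubd Us
    exact ⟨x, by simp, hx⟩
  · obtain ⟨lm, hlm, hmax⟩ := list_max Prod.fst Ls hne
    by_cases hs : ∃ l ∈ Ls, l.1 = lm.1 ∧ l.2 = true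
    · obtain ⟨l0, hl0, hl0m, hl0s⟩ := hs
      have hu : ∀ u ∈ Us, lm.1 < u.1 := by
        intro u hu
        have hp := h l0 hl0 u hu
        rw [pok, hl0s] at hp
        simp at hp
        rw [← hl0m]
        exact hp
      obtain ⟨x, hmx, hx⟩ := ex_ubd_gt lm.1 Us hu
      refine ⟨x, ?_, hx⟩
      intro l hl
      have h1 := hmax l hl
      obtain ⟨v, s⟩ := l
      simp only at h1
      cases s <;> simp [lbd] <;> linarith
    · push_neg at hs
      refine ⟨lm.1, ?_, ?_⟩
      · intro l hl
        have h1 := hmax l hl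
        have h2 := hs l hl
        obtain ⟨v, s⟩ := l
        simp only at h1
        cases s
        · simpa [lbd] using h1
        · simp only [lbd, if_true]
          exact lt_of_le_of_ne h1 (fun hh => (h2 hh) rfl)
      · intro u hu
        have hp := h lm hlm u hu
        have h2 := hs lm hlm
        have hlmf : lm.2 = false := by simpa using h2 rfl
        rw [pok, hlmf] at hp
        obtain ⟨b, t⟩ := u
        simp only at hp ⊢
        cases t <;> simp [ubd] <;> simp at hp <;> linarith

end HellyAux

section DecompAux

variable {α : Type*}

def lowersB : List (α × Cmp) → List (α × Bool)
  | [] => []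
  | (t, .lt) :: r => (t, true) :: lowersB r
  | (t, .le) :: r => (t, false) :: lowersB r
  | (t, .eq) :: r => (t, false) :: lowersB r
  | (_, .ge) :: r => lowersB r
  | (_, .gt) :: r => lowersB r

def uppersB : List (α × Cmp) → List (α × Bool)
  | [] => []
  | (t, .gt) :: r => (t, true) :: uppersB r
  | (t, .ge) :: r => (t, false) :: uppersB r
  | (t, .eq) :: r => (t, false) :: uppersB r
  | (_, .lt) :: r => uppersB r
  | (_, .le) :: r => uppersB r

lemma lowersB_mem : ∀ {Lc : List (α × Cmp)} {l}, l ∈ lowersB Lc → ∃ a ∈ Lc, a.1 = l.1 := by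
  intro Lc
  induction Lc with
  | nil => intro l h; simp [lowersB] at h
  | cons a r ih =>
    intro l h
    obtain ⟨t, c⟩ := a
    cases c <;> simp only [lowersB] at h <;>
      first
      | (rcases List.mem_cons.1 h with rfl | h
         · exact ⟨(t, _), List.mem_cons_self, rfl⟩
         · obtain ⟨b, hb, hbb⟩ := ih h
           exact ⟨b, List.mem_cons_of_mem _ hb, hbb⟩)
      | (obtain ⟨b, hb, hbb⟩ := ih h
         exact ⟨b, List.mem_cons_of_mem _ hb, hbb⟩)

lemma uppersB_mem : ∀ {Lc : List (α × Cmp)} {l}, l ∈ uppersB Lc → ∃ a ∈ Lc, a.1 = l.1 := by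
  intro Lc
  induction Lc with
  | nil => intro l h; simp [uppersB] at h
  | cons a r ih =>
    intro l h
    obtain ⟨t, c⟩ := a
    cases c <;> simp only [uppersB] at h <;>
      first
      | (rcases List.mem_cons.1 h with rfl | h
         · exact ⟨(t, _), List.mem_cons_self, rfl⟩
         · obtain ⟨b, hb, hbb⟩ := ih h
           exact ⟨b, List.mem_cons_of_mem _ hb, hbb⟩)
      | (obtain ⟨b, hb, hbb⟩ := ih h
         exact ⟨b, List.mem_cons_of_mem _ hb, hbb⟩)

lemma clk_decomp (f : α → ℝ) (x : ℝ) (Lc : List (α × Cmp)) :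
    (∀ a ∈ Lc, a.2.holds (f a.1) x) ↔
      ((∀ l ∈ lowersB Lc, lbd x (f l.1, l.2)) ∧ (∀ u ∈ uppersB Lc, ubd x (f u.1, u.2))) := by
  induction Lc with
  | nil => simp [lowersB, uppersB]
  | cons a r ih =>
    obtain ⟨t, c⟩ := a
    cases c <;>
      simp only [lowersB, uppersB, List.forall_mem_cons] <;>
      rw [ih] <;>
      simp [Cmp.holds, lbd, ubd] <;>
      first
      | tauto
      | (simp only [le_antisymm_iff]; tauto)

def elapsedClk (Lc : List (α × Cmp)) : List (α × Cmp) :=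
  (lowersB Lc).map fun l => (l.1, if l.2 then Cmp.lt else Cmp.le)

def pairAtoms (Lc : List (α × Cmp)) : List (α × Cmp × α) :=
  ((lowersB Lc).product (uppersB Lc)).map fun lu =>
    (lu.1.1, (if lu.1.2 || lu.2.2 then Cmp.lt else Cmp.le), lu.2.1)

lemma elapsedClk_mem {Lc : List (α × Cmp)} {a} (h : a ∈ elapsedClk Lc) :
    ∃ b ∈ Lc, b.1 = a.1 := by
  obtain ⟨l, hl, rfl⟩ := List.mem_map.1 h
  exact lowersB_mem hl

lemma pairAtoms_mem {Lc : List (α × Cmp)} {a} (h : a ∈ pairAtoms Lc) :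
    (∃ b ∈ Lc, b.1 = a.1) ∧ (∃ b ∈ Lc, b.1 = a.2.2) := by
  obtain ⟨lu, hlu, rfl⟩ := List.mem_map.1 h
  obtain ⟨l, u⟩ := lu
  rw [List.pair_mem_product] at hlu
  exact ⟨lowersB_mem hlu.1, uppersB_mem hlu.2⟩

lemma forall_mem_product {β γ : Type*} {l : List β} {u : List γ} {Q : β × γ → Prop} :
    (∀ a ∈ l.product u, Q a) ↔ ∀ x ∈ l, ∀ y ∈ u, Q (x, y) := by
  constructor
  · intro h x hx y hy
    exact h _ (List.pair_mem_product.2 ⟨hx, hy⟩)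
  · intro h a ha
    obtain ⟨x, y⟩ := a
    rw [List.pair_mem_product] at ha
    exact h _ ha.1 _ ha.2

lemma elapsedClk_sem (f : α → ℝ) (x : ℝ) (Lc : List (α × Cmp)) :
    (∀ a ∈ elapsedClk Lc, a.2.holds (f a.1) x) ↔
      ∀ l ∈ lowersB Lc, lbd x (f l.1, l.2) := by
  rw [elapsedClk, List.forall_mem_map]
  refine forall₂_congr fun l _ => ?_
  obtain ⟨t, s⟩ := l
  cases s <;> simp [Cmp.holds, lbd]

lemma pairAtoms_sem (f : α → ℝ) (Lc : List (α × Cmp)) :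
    (∀ a ∈ pairAtoms Lc, a.2.1.holds (f a.1) (f a.2.2)) ↔
      ∀ l ∈ lowersB Lc, ∀ u ∈ uppersB Lc, pok (f l.1, l.2) (f u.1, u.2) := by
  rw [pairAtoms, List.forall_mem_map, forall_mem_product]
  refine forall₂_congr fun l _ => forall₂_congr fun u _ => ?_
  obtain ⟨t, s⟩ := l; obtain ⟨t', s'⟩ := u
  cases s <;> cases s' <;> simp [Cmp.holds, pok]

lemma elapse_core (f : α → ℝ) (x : ℝ) (Lc : List (α × Cmp)) :
    (∃ x0, x0 ≤ x ∧ ∀ a ∈ Lc, a.2.holds (f a.1) x0) ↔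
      ((∀ a ∈ elapsedClk Lc, a.2.holds (f a.1) x) ∧
       (∀ a ∈ pairAtoms Lc, a.2.1.holds (f a.1) (f a.2.2))) := by
  rw [elapsedClk_sem, pairAtoms_sem]
  constructor
  · rintro ⟨x0, hx0, hc⟩
    rw [clk_decomp f] at hc
    exact ⟨fun l hl => lbd_mono hx0 (hc.1 l hl),
           fun l hl u hu => pok_of (hc.1 l hl) (hc.2 u hu)⟩
  · rintro ⟨hlow, hpair⟩
    have hside : ∀ l ∈ (lowersB Lc).map fun l => (f l.1, l.2),
        ∀ u ∈ (((uppersB Lc).map fun u => (f u.1, u.2))) ++ [(x, false)], pok l u := by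
      intro l hl u hu
      obtain ⟨l', hl', rfl⟩ := List.mem_map.1 hl
      rcases List.mem_append.1 hu with hu | hu
      · obtain ⟨u', hu', rfl⟩ := List.mem_map.1 hu
        exact hpair l' hl' u' hu'
      · rw [List.mem_singleton] at hu
        subst hu
        rw [pok_upper_free]
        exact hlow l' hl'
    obtain ⟨x0, h1, h2⟩ := helly _ _ hside
    refine ⟨x0, ?_, ?_⟩
    · have := h2 (x, false) (List.mem_append_right _ (List.mem_singleton_self _))
      simpa [ubd] using this
    · rw [clk_decomp f]
      constructor
      · intro l hl
        exact h1 _ (List.mem_map.2 ⟨l, hl, rfl⟩)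
      · intro u hu
        exact h2 _ (List.mem_append_left _ (List.mem_map.2 ⟨u, hu, rfl⟩))

lemma proj_core (f : α → ℝ) (Lc : List (α × Cmp)) :
    (∃ x0, ∀ a ∈ Lc, a.2.holds (f a.1) x0) ↔
      (∀ a ∈ pairAtoms Lc, a.2.1.holds (f a.1) (f a.2.2)) := by
  rw [pairAtoms_sem]
  constructor
  · rintro ⟨x0, hc⟩
    rw [clk_decomp f] at hc
    exact fun l hl u hu => pok_of (hc.1 l hl) (hc.2 u hu)
  · intro hpair
    have hside : ∀ l ∈ (lowersB Lc).map fun l => (f l.1, l.2),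
        ∀ u ∈ (uppersB Lc).map fun u => (f u.1, u.2), pok l u := by
      intro l hl u hu
      obtain ⟨l', hl', rfl⟩ := List.mem_map.1 hl
      obtain ⟨u', hu', rfl⟩ := List.mem_map.1 hu
      exact hpair l' hl' u' hu'
    obtain ⟨x0, h1, h2⟩ := helly _ _ hside
    refine ⟨x0, ?_⟩
    rw [clk_decomp f]
    constructor
    · intro l hl
      exact h1 _ (List.mem_map.2 ⟨l, hl, rfl⟩)
    · intro u hu
      exact h2 _ (List.mem_map.2 ⟨u, hu, rfl⟩)

end DecompAux


section PTAAux

lemma zeroTerm_eval {P : Type} [Fintype P] (ρ : P → ℝ) : (zeroTerm P).eval ρ = 0 := by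
  simp [zeroTerm, LinTerm.eval]

def flipG {P : Type} (g : OCConstraint P) : List (LinTerm P × Cmp) :=
  g.map fun a => (a.2, a.1.flip)

lemma flipG_sem {P : Type} [Fintype P] (x : ℝ) (ρ : P → ℝ) (g : OCConstraint P) :
    (∀ a ∈ flipG g, a.2.holds (a.1.eval ρ) x) ↔ OCConstraint.sat x ρ g := by
  rw [flipG, List.forall_mem_map]
  simp only [OCConstraint.sat]
  exact forall₂_congr fun a _ => Cmp.flip_holds a.1 _ _

lemma flipG_mem {P : Type} {g : OCConstraint P} {a} (h : a ∈ flipG g) :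
    ∃ b ∈ g, b.2 = a.1 := by
  obtain ⟨b, hb, rfl⟩ := List.mem_map.1 h
  exact ⟨b, hb, rfl⟩

lemma empty_csc {σ L P : Type} [Fintype P] (A : OCPTA σ L P) {Z : Zone1 P} (hZ : Z = ∅) :
    In1CSC A Z := by
  refine ⟨[(zeroTerm P, Cmp.lt), (zeroTerm P, Cmp.gt)], [], ?_, by simp, by simp, ?_⟩
  · intro a ha
    rcases List.mem_cons.1 ha with rfl | ha
    · exact Set.mem_insert _ _
    · rcases List.mem_cons.1 ha with rfl | ha
      · exact Set.mem_insert _ _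
      · simp at ha
  · rw [hZ]
    ext ⟨x, ρ⟩
    simp only [Set.mem_empty_iff_false, Set.mem_setOf_eq, false_iff, not_and,
      List.forall_mem_cons, List.not_mem_nil]
    rintro ⟨h1, h2, -⟩
    rw [zeroTerm_eval] at h1 h2
    simp only [Cmp.holds] at h1 h2
    linarith

lemma par_sem_bridge {P : Type} [Fintype P] (ρ : P → ℝ)
    (par : List (LinTerm P × Cmp × LinTerm P)) :
    (∀ a ∈ par, a.2.1.holds (a.1.eval ρ) (a.2.2.eval ρ)) ↔
      SemL (fun k : LinTerm P × LinTerm P => ocmp (k.1.eval ρ) (k.2.eval ρ))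
        (par.map fun a => ((a.1, a.2.2), a.2.1)) := by
  simp only [SemL, List.forall_mem_map]
  exact forall₂_congr fun a _ => holds_iff_allows _ _ _

lemma back_sem_bridge {P : Type} [Fintype P] (ρ : P → ℝ)
    (l : List ((LinTerm P × LinTerm P) × Cmp)) :
    SemL (fun k : LinTerm P × LinTerm P => ocmp (k.1.eval ρ) (k.2.eval ρ)) l ↔
      (∀ b ∈ l, b.2.holds (b.1.1.eval ρ) (b.1.2.eval ρ)) := by
  simp only [SemL]
  exact forall₂_congr fun b _ => (holds_iff_allows _ _ _).symm

lemma raw_to_csc {σ L P : Type} [Fintype P] (A : OCPTA σ L P) (Z : Zone1 P)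
    (clk : List (LinTerm P × Cmp)) (par : List (LinTerm P × Cmp × LinTerm P))
    (hclk : ∀ a ∈ clk, a.1 ∈ insert (zeroTerm P) A.terms)
    (hpar : ∀ a ∈ par, a.1 ∈ insert (zeroTerm P) A.terms ∧
        a.2.2 ∈ insert (zeroTerm P) A.terms)
    (hZ : Z = {xρ : ℝ × (P → ℝ) | (∀ a ∈ clk, a.2.holds (a.1.eval xρ.2) xρ.1) ∧
        (∀ a ∈ par, a.2.1.holds (a.1.eval xρ.2) (a.2.2.eval xρ.2))}) :
    In1CSC A Z := by
  classical
  set par' : List ((LinTerm P × LinTerm P) × Cmp) :=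
    par.map fun a => ((a.1, a.2.2), a.2.1) with hpar'def
  rcases hc : canon par' with _ | L'
  · -- the parameter constraints are unsatisfiable: Z = ∅
    apply empty_csc A
    rw [hZ]
    ext ⟨x, ρ⟩
    simp only [Set.mem_setOf_eq, Set.mem_empty_iff_false, iff_false]
    rintro ⟨-, hp⟩
    exact (canon_spec par').2 _ hc ((par_sem_bridge ρ par).1 hp)
  · obtain ⟨hsem, hkeys, hpw⟩ := (canon_spec par').1 L' hc
    by_cases hbad : ∃ a ∈ L', a.1.1 = a.1.2 ∧ a.2.allows Ordering.eq = false
    · obtain ⟨a, ha, hkey, hallow⟩ := hbad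
      apply empty_csc A
      rw [hZ]
      ext ⟨x, ρ⟩
      simp only [Set.mem_setOf_eq, Set.mem_empty_iff_false, iff_false]
      rintro ⟨-, hp⟩
      have hsl := (hsem (fun k : LinTerm P × LinTerm P => ocmp (k.1.eval ρ) (k.2.eval ρ))).2
        ((par_sem_bridge ρ par).1 hp)
      have h1 := hsl a ha
      simp only at h1
      rw [hkey, ocmp_self, hallow] at h1
      exact Bool.false_ne_true h1
    · push_neg at hbad
      refine ⟨clk, (L'.filter fun b => decide (b.1.1 ≠ b.1.2)).map fun b => (b.1.1, b.2, b.1.2),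
        hclk, ?_, ?_, ?_⟩
      · -- membership conditions
        intro a ha
        obtain ⟨b, hb, rfl⟩ := List.mem_map.1 ha
        have hbL := (List.mem_filter.1 hb).1
        have hbne : b.1.1 ≠ b.1.2 := by
          have := (List.mem_filter.1 hb).2
          simpa using this
        obtain ⟨c, hcmem, hcc⟩ := hkeys b hbL
        obtain ⟨p, hp, rfl⟩ := List.mem_map.1 hcmem
        have h11 : b.1.1 = p.1 := by rw [← hcc]
        have h12 : b.1.2 = p.2.2 := by rw [← hcc]
        refine ⟨?_, ?_, hbne⟩
        · simp only [h11]; exact (hpar p hp).1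
        · simp only [h12]; exact (hpar p hp).2
      · -- pairwise distinct pairs
        have heq : ((L'.filter fun b => decide (b.1.1 ≠ b.1.2)).map
              fun b => (b.1.1, b.2, b.1.2)).map (fun a => (a.1, a.2.2)) =
            (L'.filter fun b => decide (b.1.1 ≠ b.1.2)).map Prod.fst := by
          rw [List.map_map]
          rfl
        rw [heq]
        exact List.Pairwise.sublist (List.filter_sublist.map Prod.fst) hpw
      · -- set equality
        rw [hZ]
        ext ⟨x, ρ⟩
        simp only [Set.mem_setOf_eq]
        have hchain : (∀ a ∈ par, a.2.1.holds (a.1.eval ρ) (a.2.2.eval ρ)) ↔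
            (∀ a ∈ (L'.filter fun b => decide (b.1.1 ≠ b.1.2)).map fun b => (b.1.1, b.2, b.1.2),
              a.2.1.holds (a.1.eval ρ) (a.2.2.eval ρ)) := by
          rw [par_sem_bridge ρ par, ← hpar'def, ← hsem, back_sem_bridge, List.forall_mem_map]
          constructor
          · intro h b hb
            exact h b (List.mem_filter.1 hb).1
          · intro h b hb
            by_cases hdiag : b.1.1 = b.1.2
            · have hal : b.2.allows Ordering.eq = true := by
                have := hbad b hb hdiag
                revert this
                cases b.2.allows Ordering.eq <;> simp
              rw [holds_iff_allows, show b.1.2.eval ρ = b.1.1.eval ρ by rw [← hdiag],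
                ocmp_self]
              exact hal
            · exact h b (List.mem_filter.2 ⟨hb, by simpa using hdiag⟩)
        rw [hchain]

lemma elapse_mem {P : Type} {Z : Zone1 P} {x : ℝ} {ρ : P → ℝ} :
    (x, ρ) ∈ Z.elapse ↔ ∃ x0, x0 ≤ x ∧ (x0, ρ) ∈ Z := by
  simp only [Zone1.elapse, Set.mem_setOf_eq]
  constructor
  · rintro ⟨x', d, hd, hm, rfl⟩
    exact ⟨x', by linarith, hm⟩
  · rintro ⟨x0, hle, hm⟩
    exact ⟨x0, x - x0, by linarith, hm, by ring⟩

end PTAAux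


/-- **Reachable symbolic states of a 1cPTA are 1-clock symbolic constraints**
(Lemma 25). Every reachable symbolic state `(l, C)` of an extended 1-clock PTA
`A` satisfies `C ∈ 1CSC(A)`. -/
theorem reachable_symbolic_states_in_1CSC {σ L P : Type} [Fintype P]
    (A : OCPTA σ L P) {s : L × Zone1 P} (hs : OCReach A s) :
    In1CSC A s.2 := by
  induction hs with
  | init =>
    apply raw_to_csc A _ ((zeroTerm P, Cmp.le) :: flipG (A.inv A.init)) []
    · intro a ha
      rcases List.mem_cons.1 ha with rfl | ha
      · exact Set.mem_insert _ _
      · obtain ⟨b, hb, hbb⟩ := flipG_mem ha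
        exact Set.mem_insert_of_mem _ (Or.inl ⟨A.init, b, hb, hbb⟩)
    · simp
    · have hinit : (initSym1 A).2 =
          Zone1.elapse {xρ | xρ.1 = 0} ∩ ocZone (A.inv A.init) := rfl
      rw [hinit]
      ext ⟨x, ρ⟩
      rw [Set.mem_inter_iff, elapse_mem]
      simp only [Set.mem_setOf_eq, ocZone, List.forall_mem_cons, List.not_mem_nil,
        false_implies, implies_true, and_true]
      rw [flipG_sem, zeroTerm_eval]
      simp only [Cmp.holds]
      constructor
      · rintro ⟨⟨x0, hle, hx00⟩, hsat⟩
        subst hx00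
        exact ⟨hle, hsat⟩
      · rintro ⟨h0, hsat⟩
        exact ⟨⟨0, h0, rfl⟩, hsat⟩
  | @succ t t' h1 h2 ih =>
    obtain ⟨e, he, hsrc, hdst, hzeq, hne⟩ := h2
    obtain ⟨Lc, D, hLc, hD, hpw, hZrep⟩ := ih
    have hLc1 : ∀ a ∈ Lc ++ flipG e.guard, a.1 ∈ insert (zeroTerm P) A.terms := by
      intro a ha
      rcases List.mem_append.1 ha with ha | ha
      · exact hLc a ha
      · obtain ⟨b, hb, hbb⟩ := flipG_mem ha
        exact Set.mem_insert_of_mem _ (Or.inr ⟨e, he, b, hb, hbb⟩)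
    have hterm : ∀ t : LinTerm P, (∃ a ∈ Lc ++ flipG e.guard, a.1 = t) →
        t ∈ insert (zeroTerm P) A.terms := by
      rintro t ⟨a, ha, rfl⟩
      exact hLc1 a ha
    have hW : t.2 ∩ ocZone e.guard =
        {xρ : ℝ × (P → ℝ) | (∀ a ∈ Lc ++ flipG e.guard, a.2.holds (a.1.eval xρ.2) xρ.1) ∧
          (∀ a ∈ D, a.2.1.holds (a.1.eval xρ.2) (a.2.2.eval xρ.2))} := by
      rw [hZrep]
      ext ⟨x, ρ⟩
      simp only [Set.mem_inter_iff, Set.mem_setOf_eq, ocZone, List.forall_mem_append]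
      rw [flipG_sem]
      tauto
    rw [hzeq]
    cases hb : e.reset
    · -- no reset
      have hrw : Zone1.reset false (t.2 ∩ ocZone e.guard) = t.2 ∩ ocZone e.guard := by
        simp [Zone1.reset]
      rw [hrw]
      apply raw_to_csc A _ (elapsedClk (Lc ++ flipG e.guard) ++ flipG (A.inv e.dst))
        (D ++ pairAtoms (Lc ++ flipG e.guard))
      · intro a ha
        rcases List.mem_append.1 ha with ha | ha
        · exact hterm _ (elapsedClk_mem ha)
        · obtain ⟨b, hbm, hbb⟩ := flipG_mem ha
          exact Set.mem_insert_of_mem _ (Or.inl ⟨e.dst, b, hbm, hbb⟩)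
      · intro a ha
        rcases List.mem_append.1 ha with ha | ha
        · exact ⟨(hD a ha).1, (hD a ha).2.1⟩
        · exact ⟨hterm _ (pairAtoms_mem ha).1, hterm _ (pairAtoms_mem ha).2⟩
      · rw [hW]
        ext ⟨x, ρ⟩
        rw [Set.mem_inter_iff, elapse_mem]
        simp only [Set.mem_setOf_eq, ocZone, List.forall_mem_append]
        rw [flipG_sem]
        have hcore := elapse_core (fun t : LinTerm P => t.eval ρ) x (Lc ++ flipG e.guard)
        constructor
        · rintro ⟨⟨x0, hle, ⟨hcA, hcB⟩, hDρ⟩, hinv⟩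
          have h3 := hcore.1 ⟨x0, hle, List.forall_mem_append.2 ⟨hcA, hcB⟩⟩
          exact ⟨⟨h3.1, hinv⟩, hDρ, h3.2⟩
        · rintro ⟨⟨hel, hinv⟩, hDρ, hpairs⟩
          obtain ⟨x0, hle, hclk0⟩ := hcore.2 ⟨hel, hpairs⟩
          exact ⟨⟨x0, hle, List.forall_mem_append.1 hclk0, hDρ⟩, hinv⟩
    · -- reset
      have hrw : Zone1.reset true (t.2 ∩ ocZone e.guard) =
          {xρ : ℝ × (P → ℝ) | ∃ x1, (x1, xρ.2) ∈ t.2 ∩ ocZone e.guard ∧ xρ.1 = 0} := by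
        simp [Zone1.reset]
      rw [hrw]
      apply raw_to_csc A _ ((zeroTerm P, Cmp.le) :: flipG (A.inv e.dst))
        (D ++ pairAtoms (Lc ++ flipG e.guard))
      · intro a ha
        rcases List.mem_cons.1 ha with rfl | ha
        · exact Set.mem_insert _ _
        · obtain ⟨b, hbm, hbb⟩ := flipG_mem ha
          exact Set.mem_insert_of_mem _ (Or.inl ⟨e.dst, b, hbm, hbb⟩)
      · intro a ha
        rcases List.mem_append.1 ha with ha | ha
        · exact ⟨(hD a ha).1, (hD a ha).2.1⟩
        · exact ⟨hterm _ (pairAtoms_mem ha).1, hterm _ (pairAtoms_mem ha).2⟩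
      · rw [hW]
        ext ⟨x, ρ⟩
        rw [Set.mem_inter_iff, elapse_mem]
        simp only [Set.mem_setOf_eq, ocZone, List.forall_mem_append, List.forall_mem_cons,
          List.not_mem_nil, false_implies, implies_true, and_true]
        rw [flipG_sem, zeroTerm_eval]
        have hcore := proj_core (fun t : LinTerm P => t.eval ρ) (Lc ++ flipG e.guard)
        constructor
        · rintro ⟨⟨x0, hle, x1, ⟨⟨hcA, hcB⟩, hDρ⟩, hx00⟩, hinv⟩
          have hpairs := hcore.1 ⟨x1, List.forall_mem_append.2 ⟨hcA, hcB⟩⟩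
          subst hx00
          exact ⟨⟨hle, hinv⟩, hDρ, hpairs⟩
        · rintro ⟨⟨h0x, hinv⟩, hDρ, hpairs⟩
          obtain ⟨x1, hclk1⟩ := hcore.2 hpairs
          exact ⟨⟨0, h0x, x1, ⟨List.forall_mem_append.1 hclk1, hDρ⟩, rfl⟩, hinv⟩

end PTAPaper
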